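/- Fixation probability via the stationary CASP: let A_eq have the stationary distribution of the Cannings ancestral selection process (A_m)_{m≥0}. Then the fixation probability of a single beneficial mutant satisfies π_N := lim_{g→∞} P(K_g = 0 | K_0 = N−1) = E[A_eq / N]; in particular this limit exists. -/

import Mathlib

open MeasureTheory Filter Finset Topology

noncomputable section

/-- The paintbox condition: `μ` is the law of an exchangeable random vector of
probability weights `(W_1, …, W_N)` (indexed by `0, …, N-1`, padded by zeros). -/
def IsWeights (N : ℕ) (μ : Measure (ℕ → ℝ)) : Prop :=
  IsProbabilityMeasure μ ∧
  (∀ᵐ w ∂μ, (∀ i, 0 ≤ w i) ∧ (∀ i, N ≤ i → w i = 0) ∧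
    ∑ i ∈ Finset.range N, w i = 1) ∧
  (∀ σ : Equiv.Perm ℕ, (∀ i, N ≤ i → σ i = i) →
    Measure.map (fun w => w ∘ σ) μ = μ)

/-- The (conditional on the weights) success probability `P(k, 𝒲)` for the mixed
binomial transition of the Cannings frequency process. -/
def selProb (N : ℕ) (s : ℝ) (k : ℕ) (w : ℕ → ℝ) : ℝ :=
  ((1 - s) * ∑ i ∈ Finset.range k, w i) /
    ((1 - s) * ∑ i ∈ Finset.range k, w i + ∑ i ∈ Finset.Ico k N, w i)

/-- One-step transition probability of the Cannings frequency process with selection: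
given `K_{g-1} = k`, `K_g` is mixed binomial with parameters `N` and `P(k,𝒲)`. -/
def canningsStep (N : ℕ) (s : ℝ) (μ : Measure (ℕ → ℝ)) (k j : ℕ) : ℝ :=
  ∫ w, (N.choose j : ℝ) * selProb N s k w ^ j * (1 - selProb N s k w) ^ (N - j) ∂μ

/-- `canningsProb N s μ g k j = P(K_g = j | K_0 = k)`. -/
def canningsProb (N : ℕ) (s : ℝ) (μ : Measure (ℕ → ℝ)) : ℕ → ℕ → ℕ → ℝ
  | 0, k, j => if j = k then 1 else 0
  | g + 1, k, j => ∑ i ∈ Finset.range (N + 1),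
      canningsProb N s μ g k i * canningsStep N s μ i j

/-- Law of the sum of `a` independent Geometric(1-s) random variables (trials up to
and including the first success): `negbinom s a h = P(G^{(1)} + ⋯ + G^{(a)} = h)`. -/
def negbinom (s : ℝ) (a h : ℕ) : ℝ :=
  if a ≤ h then ((h - 1).choose (a - 1) : ℝ) * (1 - s) ^ a * s ^ (h - a) else 0

/-- Probability (given the weights `w`) that exactly `j` boxes are occupied when
`h` balls are placed independently into `N` boxes, ball into box `i` w.p. `w i`
(inclusion–exclusion formula). -/
def occupancy (N : ℕ) (w : ℕ → ℝ) (h j : ℕ) : ℝ :=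
  ∑ S ∈ (Finset.range N).powersetCard j, ∑ T ∈ S.powerset,
    (-1 : ℝ) ^ (j - T.card) * (∑ i ∈ T, w i) ^ h

/-- One-step transition probability of the Cannings ancestral selection process
(CASP): branching (negative binomial) followed by coalescence (balls in boxes). -/
def caspStep (N : ℕ) (s : ℝ) (μ : Measure (ℕ → ℝ)) (a j : ℕ) : ℝ :=
  ∑' h : ℕ, negbinom s a h * ∫ w, occupancy N w h j ∂μ

/-- `caspProb N s μ m a j = P(A_m = j | A_0 = a)`. -/
def caspProb (N : ℕ) (s : ℝ) (μ : Measure (ℕ → ℝ)) : ℕ → ℕ → ℕ → ℝ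
  | 0, a, j => if j = a then 1 else 0
  | m + 1, a, j => ∑ i ∈ Finset.range (N + 1),
      caspProb N s μ m a i * caspStep N s μ i j

/-- The exponent `b_N = - ln s_N / ln N`, so that `s_N = N^{-b_N}`. -/
def bexp (s : ℕ → ℝ) (N : ℕ) : ℝ := - Real.log (s N) / Real.log N

/-- `A` is (a realization on `(Ω, P)` of) the Cannings ancestral selection process
with parameters `N`, `ℒ(𝒲) = μ`, `s`, started at `a0`: its finite-dimensional
distributions are the Markovian ones with one-step transitions `caspStep`. -/
def IsCASPProcess (N : ℕ) (s : ℝ) (μ : Measure (ℕ → ℝ)) {Ω : Type}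
    [MeasurableSpace Ω] (P : Measure Ω) (A : ℕ → Ω → ℕ) (a0 : ℕ) : Prop :=
  IsProbabilityMeasure P ∧
  ∀ (m : ℕ) (a : ℕ → ℕ),
    (P {ω | ∀ i ≤ m, A i ω = a i}).toReal =
      (if a 0 = a0 then 1 else 0) *
        ∏ i ∈ Finset.range m, caspStep N s μ (a i) (a (i + 1))

/-- Upward jump rate of the Moran ancestral selection process. -/
def maspUp (N : ℕ) (s : ℝ) (k : ℕ) : ℝ := k * s * ((N : ℝ) - k) / N

/-- Downward jump rate of the Moran ancestral selection process. -/
def maspDown (N : ℕ) (ρ2 : ℝ) (k : ℕ) : ℝ := ρ2 / N * (k.choose 2 : ℝ)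

/-- Total jump rate of the MASP. -/
def maspRate (N : ℕ) (ρ2 s : ℝ) (k : ℕ) : ℝ := maspUp N s k + maspDown N ρ2 k

/-- Transition matrix of the embedded jump chain of the MASP. -/
def maspJump (N : ℕ) (ρ2 s : ℝ) (k j : ℕ) : ℝ :=
  if j = k + 1 then maspUp N s k / maspRate N ρ2 s k
  else if j + 1 = k then maspDown N ρ2 k / maspRate N ρ2 s k
  else 0

/-- `(J, E)` is the jump-hold description of the Moran ancestral selection process
with parameters `N`, `ρ2`, `s`, started at `n0`: `J` is the embedded jump chain,
and conditionally on it the holding times `E i` are independent exponentials with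
the state-dependent total rates. -/
def IsMASP (N : ℕ) (ρ2 s : ℝ) {Ω : Type} [MeasurableSpace Ω] (P : Measure Ω)
    (J : ℕ → Ω → ℕ) (E : ℕ → Ω → ℝ) (n0 : ℕ) : Prop :=
  IsProbabilityMeasure P ∧
  ∀ (m : ℕ) (a : ℕ → ℕ) (t : ℕ → ℝ), (∀ i, 0 ≤ t i) →
    (P {ω | (∀ i ≤ m, J i ω = a i) ∧ (∀ i ≤ m, t i ≤ E i ω)}).toReal =
      (if a 0 = n0 then 1 else 0)
        * (∏ i ∈ Finset.range m, maspJump N ρ2 s (a i) (a (i + 1)))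
        * ∏ i ∈ Finset.range (m + 1), Real.exp (-(maspRate N ρ2 s (a i)) * t i)

/-- The value `B_r` of the MASP at time `r`, read off from the jump-hold data. -/
def maspVal {Ω : Type} (J : ℕ → Ω → ℕ) (E : ℕ → Ω → ℝ) (r : ℝ) (ω : Ω) : ℕ :=
  J (sSup {i : ℕ | ∑ l ∈ Finset.range i, E l ω ≤ r}) ω


namespace FPaux


/-- "good" weight vectors -/
def Good (N : ℕ) (w : ℕ → ℝ) : Prop :=
  (∀ i, 0 ≤ w i) ∧ (∀ i, N ≤ i → w i = 0) ∧ ∑ i ∈ Finset.range N, w i = 1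

lemma good_ae {N : ℕ} {μ : Measure (ℕ → ℝ)} (hw : IsWeights N μ) :
    ∀ᵐ w ∂μ, Good N w := hw.2.1

lemma meas_sumT (T : Finset ℕ) : Measurable (fun w : ℕ → ℝ => ∑ i ∈ T, w i) :=
  Finset.measurable_sum T (fun i _ => measurable_pi_apply i)

lemma meas_selProb (N : ℕ) (s : ℝ) (k : ℕ) : Measurable (selProb N s k) := by
  unfold selProb
  exact (((meas_sumT (range k)).const_mul _).div
    (((meas_sumT (range k)).const_mul _).add (meas_sumT (Ico k N))))

lemma Good.sumT_nonneg {N : ℕ} {w : ℕ → ℝ} (hg : Good N w) (T : Finset ℕ) :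
    0 ≤ ∑ i ∈ T, w i := Finset.sum_nonneg fun i _ => hg.1 i

lemma Good.sumT_le_one {N : ℕ} {w : ℕ → ℝ} (hg : Good N w) {T : Finset ℕ}
    (hT : T ⊆ range N) : ∑ i ∈ T, w i ≤ 1 := by
  rw [← hg.2.2]
  exact Finset.sum_le_sum_of_subset_of_nonneg hT (fun i _ _ => hg.1 i)

lemma Good.sum_Ico {N k : ℕ} {w : ℕ → ℝ} (hg : Good N w) (hk : k ≤ N) :
    ∑ i ∈ Finset.Ico k N, w i = 1 - ∑ i ∈ Finset.range k, w i := by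
  have := Finset.sum_range_add_sum_Ico w hk
  rw [hg.2.2] at this; linarith

lemma Good.selProb_eq {N k : ℕ} {s : ℝ} {w : ℕ → ℝ} (hg : Good N w) (hk : k ≤ N) :
    selProb N s k w =
      (1 - s) * (∑ i ∈ Finset.range k, w i) / (1 - s * ∑ i ∈ Finset.range k, w i) := by
  unfold selProb
  rw [hg.sum_Ico hk]; ring_nf

lemma Good.selProb_nonneg {N k : ℕ} {s : ℝ} {w : ℕ → ℝ} (hg : Good N w) (hk : k ≤ N)
    (hs0 : 0 < s) (hs1 : s < 1) : 0 ≤ selProb N s k w := by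
  rw [hg.selProb_eq hk]
  have h1 : 0 ≤ ∑ i ∈ Finset.range k, w i := hg.sumT_nonneg _
  have h2 : ∑ i ∈ Finset.range k, w i ≤ 1 := hg.sumT_le_one (by
    intro x hx; simp only [Finset.mem_range] at *; omega)
  have h3 : s * ∑ i ∈ Finset.range k, w i < 1 :=
    lt_of_le_of_lt (by nlinarith) hs1
  apply div_nonneg (by nlinarith) (by linarith)

lemma Good.selProb_le_one {N k : ℕ} {s : ℝ} {w : ℕ → ℝ} (hg : Good N w) (hk : k ≤ N)
    (hs0 : 0 < s) (hs1 : s < 1) : selProb N s k w ≤ 1 := by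
  rw [hg.selProb_eq hk]
  have h1 : 0 ≤ ∑ i ∈ Finset.range k, w i := hg.sumT_nonneg _
  have h2 : ∑ i ∈ Finset.range k, w i ≤ 1 := hg.sumT_le_one (by
    intro x hx; simp only [Finset.mem_range] at *; omega)
  have h3 : s * ∑ i ∈ Finset.range k, w i < 1 := lt_of_le_of_lt (by nlinarith) hs1
  rw [div_le_one (by linarith)]
  nlinarith

/-- binomial pmf row sum -/
lemma binom_row (N : ℕ) (p : ℝ) :
    ∑ j ∈ range (N + 1), (N.choose j : ℝ) * p ^ j * (1 - p) ^ (N - j) = 1 := by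
  have h := add_pow p (1 - p) N
  simp only [add_sub_cancel, one_pow] at h
  calc ∑ j ∈ range (N + 1), (N.choose j : ℝ) * p ^ j * (1 - p) ^ (N - j)
      = ∑ j ∈ range (N + 1), p ^ j * (1 - p) ^ (N - j) * (N.choose j : ℝ) :=
        Finset.sum_congr rfl fun j _ => by ring
    _ = 1 := h.symm

/-- binomial factorial moment -/
lemma binom_moment (N a : ℕ) (ha : a ≤ N) (p : ℝ) :
    ∑ j ∈ range (N + 1), (N.choose j : ℝ) * p ^ j * (1 - p) ^ (N - j) * (j.choose a : ℝ)
      = (N.choose a : ℝ) * p ^ a := by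
  have key : ∀ j ∈ range (N + 1), (N.choose j : ℝ) * p ^ j * (1 - p) ^ (N - j) * (j.choose a : ℝ)
      = (if a ≤ j then
          (N.choose a : ℝ) * ((N - a).choose (j - a) : ℝ) * p ^ j * (1 - p) ^ (N - j) else 0) := by
    intro j hj
    rcases le_or_gt a j with h | h
    · rw [if_pos h]
      have hc : (N.choose j) * (j.choose a) = (N.choose a) * ((N - a).choose (j - a)) :=
        Nat.choose_mul h
      have hc' : ((N.choose j : ℝ)) * (j.choose a : ℝ)
          = (N.choose a : ℝ) * ((N - a).choose (j - a) : ℝ) := by exact_mod_cast hc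
      linear_combination (p ^ j * (1 - p) ^ (N - j)) * hc'
    · rw [if_neg (not_le.2 h), Nat.choose_eq_zero_of_lt h]
      push_cast; ring
  rw [Finset.sum_congr rfl key, ← Finset.sum_filter]
  have hfil : Finset.filter (fun j => a ≤ j) (range (N + 1)) = Finset.Ico a (N + 1) := by
    ext j; simp [Finset.mem_filter, Finset.mem_Ico, Finset.mem_range]; omega
  rw [hfil, Finset.sum_Ico_eq_sum_range]
  have hNa : N + 1 - a = (N - a) + 1 := by omega
  rw [hNa]
  have expand : ∀ j ∈ range ((N - a) + 1),
      (N.choose a : ℝ) * ((N - a).choose (a + j - a) : ℝ) * p ^ (a + j) * (1 - p) ^ (N - (a + j))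
      = (N.choose a : ℝ) * p ^ a * (((N - a).choose j : ℝ) * p ^ j * (1 - p) ^ ((N - a) - j)) := by
    intro j hj
    simp only [Finset.mem_range] at hj
    have h1 : a + j - a = j := by omega
    have h2 : N - (a + j) = (N - a) - j := by omega
    rw [h1, h2, pow_add]; ring
  rw [Finset.sum_congr rfl expand, ← Finset.mul_sum, binom_row (N - a) p, mul_one]


-- === chunk 2 ===
/-- duality function H(k,a) = C(k,a)/C(N,a) -/
def Hd (N k a : ℕ) : ℝ := (k.choose a : ℝ) / (N.choose a : ℝ)

lemma Hd_nonneg (N k a : ℕ) : 0 ≤ Hd N k a := by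
  unfold Hd; positivity

lemma Hd_le_one {N k : ℕ} (a : ℕ) (h : k ≤ N) : Hd N k a ≤ 1 := by
  unfold Hd
  rcases le_or_gt a N with h' | h'
  · rw [div_le_one (by exact_mod_cast Nat.choose_pos h')]
    exact_mod_cast Nat.choose_le_choose a h
  · rw [Nat.choose_eq_zero_of_lt (lt_of_le_of_lt h h')]
    simp
lemma Hd_self {N a : ℕ} (h : a ≤ N) : Hd N N a = 1 := by
  unfold Hd
  rw [div_self (by exact_mod_cast (Nat.choose_pos h).ne')]
lemma Hd_zero {N a : ℕ} (h : 1 ≤ a) : Hd N 0 a = 0 := by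
  unfold Hd
  rw [Nat.choose_eq_zero_of_lt h]; simp
lemma Hd_predN {N i : ℕ} (hN : 1 ≤ N) (hi : i ≤ N) :
    Hd N (N - 1) i = ((N : ℝ) - i) / N := by
  unfold Hd
  have h1 : (N - 1).choose i * N = N.choose i * (N - i) := by
    rcases Nat.lt_or_ge i N with h | h
    · have e1 : N.choose i * (N - i) = N.choose (i + 1) * (i + 1) :=
        (Nat.choose_succ_right_eq N i).symm
      have e2 : N * (N - 1).choose i = N.choose (i + 1) * (i + 1) := by
        have h3 := Nat.add_one_mul_choose_eq (N - 1) i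
        have hsucc : N - 1 + 1 = N := Nat.sub_add_cancel hN
        rw [hsucc] at h3
        simpa [Nat.succ_eq_add_one] using h3
      rw [Nat.mul_comm ((N-1).choose i) N]
      omega
    · have hiN : i = N := le_antisymm hi h
      subst hiN
      rw [Nat.choose_eq_zero_of_lt (by omega), Nat.sub_self]
      simp
  have hN0 : (N : ℝ) ≠ 0 := by positivity
  have hCi : (0:ℝ) < N.choose i := by exact_mod_cast Nat.choose_pos hi
  have h1' : ((N - 1).choose i : ℝ) * N = (N.choose i : ℝ) * ((N : ℝ) - i) := by
    have := congrArg (Nat.cast : ℕ → ℝ) h1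
    push_cast at this
    rw [Nat.cast_sub hi] at this
    exact_mod_cast this
  field_simp
  linarith [h1']

section Cannings
variable {N : ℕ} {s : ℝ} {μ : Measure (ℕ → ℝ)}

/-- the binomial integrand -/
lemma integrable_binterm (hw : IsWeights N μ) (hs0 : 0 < s) (hs1 : s < 1)
    {k : ℕ} (hk : k ≤ N) (j : ℕ) :
    Integrable (fun w => (N.choose j : ℝ) * selProb N s k w ^ j
      * (1 - selProb N s k w) ^ (N - j)) μ := by
  have : IsProbabilityMeasure μ := hw.1
  refine Integrable.mono' (integrable_const ((N.choose j : ℝ))) ?_ ?_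
  · exact (((meas_selProb N s k).pow_const j).const_mul _ |>.mul
      (((meas_selProb N s k).const_sub 1).pow_const (N - j))).aestronglyMeasurable
  · filter_upwards [good_ae hw] with w hg
    have h0 := hg.selProb_nonneg hk hs0 hs1
    have h1 := hg.selProb_le_one hk hs0 hs1
    have e1 : |selProb N s k w ^ j| ≤ 1 := by
      rw [abs_pow]; exact pow_le_one₀ (abs_nonneg _) (by rw [abs_of_nonneg h0]; exact h1)
    have e2 : |(1 - selProb N s k w) ^ (N - j)| ≤ 1 := by
      rw [abs_pow]; exact pow_le_one₀ (abs_nonneg _) (by rw [abs_of_nonneg (by linarith)]; linarith)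
    have : ‖(N.choose j : ℝ) * selProb N s k w ^ j * (1 - selProb N s k w) ^ (N - j)‖
        ≤ (N.choose j : ℝ) * 1 * 1 := by
      rw [Real.norm_eq_abs, abs_mul, abs_mul,
        abs_of_nonneg (by positivity : (0:ℝ) ≤ (N.choose j : ℝ))]
      gcongr
      all_goals first
        | exact e1
        | exact e2
    simpa using this

lemma canningsStep_nonneg (hw : IsWeights N μ) (hs0 : 0 < s) (hs1 : s < 1)
    {k : ℕ} (hk : k ≤ N) (j : ℕ) : 0 ≤ canningsStep N s μ k j := by
  apply integral_nonneg_of_ae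
  filter_upwards [good_ae hw] with w hg
  have h0 := hg.selProb_nonneg hk hs0 hs1
  have h1 := hg.selProb_le_one hk hs0 hs1
  have h2 : (0:ℝ) ≤ 1 - selProb N s k w := by linarith
  exact mul_nonneg (mul_nonneg (by positivity) (pow_nonneg h0 j)) (pow_nonneg h2 _)

lemma canningsStep_row (hw : IsWeights N μ) (hs0 : 0 < s) (hs1 : s < 1)
    {k : ℕ} (hk : k ≤ N) :
    ∑ j ∈ range (N + 1), canningsStep N s μ k j = 1 := by
  have : IsProbabilityMeasure μ := hw.1
  unfold canningsStep
  rw [← integral_finset_sum _ (fun j _ => integrable_binterm hw hs0 hs1 hk j)]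
  have : ∫ w, (∑ j ∈ range (N + 1),
      (N.choose j : ℝ) * selProb N s k w ^ j * (1 - selProb N s k w) ^ (N - j)) ∂μ
      = ∫ _, (1:ℝ) ∂μ := by
    apply integral_congr_ae
    filter_upwards [] with w
    exact binom_row N (selProb N s k w)
  rw [this]; simp

/-- D1 : the Cannings side of the one-step duality -/
lemma canningsStep_H (hw : IsWeights N μ) (hs0 : 0 < s) (hs1 : s < 1)
    {k a : ℕ} (hk : k ≤ N) (ha : a ≤ N) :
    ∑ j ∈ range (N + 1), canningsStep N s μ k j * Hd N j a
      = ∫ w, selProb N s k w ^ a ∂μ := by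
  unfold canningsStep
  have e1 : ∀ j ∈ range (N + 1),
      (∫ w, (N.choose j : ℝ) * selProb N s k w ^ j * (1 - selProb N s k w) ^ (N - j) ∂μ)
        * Hd N j a
      = ∫ w, (N.choose j : ℝ) * selProb N s k w ^ j * (1 - selProb N s k w) ^ (N - j)
          * Hd N j a ∂μ := by
    intro j _
    rw [← integral_mul_const]
  rw [Finset.sum_congr rfl e1,
    ← integral_finset_sum _ (fun j _ => (integrable_binterm hw hs0 hs1 hk j).mul_const _)]
  apply integral_congr_ae
  filter_upwards [] with w
  have hCa : (0:ℝ) < (N.choose a : ℝ) := by exact_mod_cast Nat.choose_pos ha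
  have : ∑ j ∈ range (N + 1), (N.choose j : ℝ) * selProb N s k w ^ j
      * (1 - selProb N s k w) ^ (N - j) * Hd N j a
      = (∑ j ∈ range (N + 1), (N.choose j : ℝ) * selProb N s k w ^ j
        * (1 - selProb N s k w) ^ (N - j) * (j.choose a : ℝ)) / (N.choose a : ℝ) := by
    rw [Finset.sum_div]
    exact Finset.sum_congr rfl fun j _ => by unfold Hd; ring
  rw [this, binom_moment N a ha, mul_div_cancel_left₀ _ hCa.ne']

lemma canningsStep_0 (hw : IsWeights N μ) (j : ℕ) :
    canningsStep N s μ 0 j = if j = 0 then 1 else 0 := by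
  have : IsProbabilityMeasure μ := hw.1
  unfold canningsStep
  have hsel : ∀ w : ℕ → ℝ, selProb N s 0 w = 0 := by
    intro w; unfold selProb; simp
  rcases Nat.eq_zero_or_pos j with rfl | hj
  · simp [hsel]
  · simp [hsel, zero_pow hj.ne', if_neg hj.ne']

lemma canningsStep_top (hw : IsWeights N μ) (hs0 : 0 < s) (hs1 : s < 1) (j : ℕ) :
    canningsStep N s μ N j = if j = N then 1 else 0 := by
  have : IsProbabilityMeasure μ := hw.1
  unfold canningsStep
  have hsel : ∀ᵐ w ∂μ, selProb N s N w = 1 := by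
    filter_upwards [good_ae hw] with w hg
    rw [hg.selProb_eq le_rfl, hg.2.2]
    rw [mul_one, mul_one]
    exact div_self (by linarith)
  rw [show (if j = N then (1:ℝ) else 0) = ∫ _, (if j = N then (1:ℝ) else 0) ∂μ by simp]
  apply integral_congr_ae
  filter_upwards [hsel] with w h
  rw [h]
  rcases eq_or_ne j N with rfl | hj
  · simp
  · rcases Nat.lt_or_ge j N with hlt | hge
    · rw [if_neg hj]
      have : N - j ≠ 0 := by omega
      simp [zero_pow this]
    · have : N < j := by omega
      rw [if_neg hj, Nat.choose_eq_zero_of_lt this]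
      simp

lemma canningsStep_escape (hw : IsWeights N μ) (hs0 : 0 < s) (hs1 : s < 1)
    {k : ℕ} (hk : k ≤ N) :
    (1:ℝ) / 2 ^ N ≤ canningsStep N s μ k 0 + canningsStep N s μ k N := by
  have : IsProbabilityMeasure μ := hw.1
  unfold canningsStep
  rw [← integral_add (integrable_binterm hw hs0 hs1 hk 0) (integrable_binterm hw hs0 hs1 hk N)]
  rw [show (1:ℝ) / 2 ^ N = ∫ _, (1:ℝ)/2 ^ N ∂μ by simp]
  apply integral_mono_ae (integrable_const _)
    ((integrable_binterm hw hs0 hs1 hk 0).add (integrable_binterm hw hs0 hs1 hk N))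
  filter_upwards [good_ae hw] with w hg
  have h0 := hg.selProb_nonneg hk hs0 hs1
  have h1 := hg.selProb_le_one hk hs0 hs1
  set p := selProb N s k w with hp
  have hhalf : (1:ℝ)/2^N = (1/2)^N := by rw [div_pow, one_pow]
  have goal : (1:ℝ)/2^N ≤ (1 - p) ^ N + p ^ N := by
    rcases le_or_gt p (1/2) with h | h
    · have h2 : (1:ℝ)/2 ≤ 1 - p := by linarith
      have h3 : ((1:ℝ)/2)^N ≤ (1-p)^N := pow_le_pow_left₀ (by norm_num) h2 N
      have h4 := pow_nonneg h0 N
      rw [hhalf]; linarith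
    · have h2 : (1:ℝ)/2 ≤ p := by linarith
      have h3 : ((1:ℝ)/2)^N ≤ p^N := pow_le_pow_left₀ (by norm_num) h2 N
      have h4 := pow_nonneg (by linarith : (0:ℝ) ≤ 1 - p) N
      rw [hhalf]; linarith
  calc (1:ℝ)/2^N ≤ (1-p)^N + p^N := goal
    _ = (N.choose 0 : ℝ) * p ^ 0 * (1 - p) ^ (N - 0)
        + (N.choose N : ℝ) * p ^ N * (1 - p) ^ (N - N) := by simp
end Cannings

section Cannings
variable {N : ℕ} {s : ℝ} {μ : Measure (ℕ → ℝ)}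
-- === chunk 3 ===
lemma cp_nonneg (hw : IsWeights N μ) (hs0 : 0 < s) (hs1 : s < 1)
    (g : ℕ) (k j : ℕ) : 0 ≤ canningsProb N s μ g k j := by
  induction g generalizing j with
  | zero => unfold canningsProb; split <;> norm_num
  | succ g ih =>
    unfold canningsProb
    apply Finset.sum_nonneg
    intro i hi
    exact mul_nonneg (ih i)
      (canningsStep_nonneg hw hs0 hs1 (Nat.lt_succ_iff.mp (Finset.mem_range.mp hi)) j)

lemma cp_row (hw : IsWeights N μ) (hs0 : 0 < s) (hs1 : s < 1)
    (g : ℕ) {k : ℕ} (hk : k ≤ N) :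
    ∑ j ∈ range (N + 1), canningsProb N s μ g k j = 1 := by
  induction g with
  | zero =>
    unfold canningsProb
    rw [Finset.sum_ite_eq' (range (N + 1)) k (fun _ => (1:ℝ))]
    rw [if_pos (Finset.mem_range.mpr (Nat.lt_succ_iff.mpr hk))]
  | succ g ih =>
    unfold canningsProb
    rw [Finset.sum_comm]
    calc ∑ i ∈ range (N + 1), ∑ j ∈ range (N + 1),
          canningsProb N s μ g k i * canningsStep N s μ i j
        = ∑ i ∈ range (N + 1), canningsProb N s μ g k i * 1 := by
          apply Finset.sum_congr rfl
          intro i hi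
          rw [← Finset.mul_sum, canningsStep_row hw hs0 hs1
            (Nat.lt_succ_iff.mp (Finset.mem_range.mp hi))]
      _ = 1 := by simpa using ih

lemma step_interior (hw : IsWeights N μ) (hs0 : 0 < s) (hs1 : s < 1)
    (hN : 1 ≤ N) {i : ℕ} (hi : i ≤ N) (hi0 : i ≠ 0) (hiN : i ≠ N) :
    ∑ j ∈ Finset.Ico 1 N, canningsStep N s μ i j ≤ 1 - 1/2^N := by
  have hsplit : (range (N + 1) : Finset ℕ) = insert 0 (insert N (Finset.Ico 1 N)) := by
    ext x
    simp only [Finset.mem_range, Finset.mem_insert, Finset.mem_Ico]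
    omega
  have h1 := canningsStep_row hw hs0 hs1 hi
  rw [hsplit, Finset.sum_insert (by
      simp only [Finset.mem_insert, Finset.mem_Ico]; omega),
    Finset.sum_insert (by simp only [Finset.mem_Ico]; omega)] at h1
  have h2 := canningsStep_escape hw hs0 hs1 hi
  linarith

lemma cp_interior (hw : IsWeights N μ) (hs0 : 0 < s) (hs1 : s < 1)
    (hN : 1 ≤ N) (g : ℕ) {k : ℕ} (hk : k ≤ N) :
    ∑ j ∈ Finset.Ico 1 N, canningsProb N s μ g k j ≤ (1 - 1/2^N) ^ g := by
  have heps : (0:ℝ) < 1/2^N := by positivity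
  have heps1 : (1:ℝ)/2^N ≤ 1 := by
    rw [div_le_one (by positivity)]
    calc (1:ℝ) = 1 ^ N := (one_pow N).symm
      _ ≤ 2 ^ N := pow_le_pow_left₀ zero_le_one one_le_two N
  induction g with
  | zero =>
    simp only [pow_zero]
    unfold canningsProb
    calc ∑ j ∈ Finset.Ico 1 N, (if j = k then (1:ℝ) else 0)
        ≤ ∑ j ∈ Finset.Ico 1 N, (if j = k then (1:ℝ) else 0)
          + (if k ∈ Finset.Ico 1 N then 0 else 0) := by simp
      _ ≤ 1 := by
          rw [Finset.sum_ite_eq' (Finset.Ico 1 N) k (fun _ => (1:ℝ))]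
          split <;> simp
  | succ g ih =>
    unfold canningsProb
    rw [Finset.sum_comm]
    have hb : ∀ i ∈ range (N + 1),
        ∑ j ∈ Finset.Ico 1 N, canningsProb N s μ g k i * canningsStep N s μ i j
        ≤ (if i ∈ Finset.Ico 1 N then canningsProb N s μ g k i * (1 - 1/2^N) else 0) := by
      intro i hi
      have hiN : i ≤ N := Nat.lt_succ_iff.mp (Finset.mem_range.mp hi)
      rw [← Finset.mul_sum]
      by_cases hmem : i ∈ Finset.Ico 1 N
      · rw [if_pos hmem]
        simp only [Finset.mem_Ico] at hmem
        exact mul_le_mul_of_nonneg_left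
          (step_interior hw hs0 hs1 hN hiN (by omega) (by omega))
          (cp_nonneg hw hs0 hs1 g k i)
      · rw [if_neg hmem]
        simp only [Finset.mem_Ico, not_and_or, not_le, not_lt] at hmem
        have : ∑ j ∈ Finset.Ico 1 N, canningsStep N s μ i j = 0 := by
          apply Finset.sum_eq_zero
          intro j hj
          simp only [Finset.mem_Ico] at hj
          rcases hmem with h0 | hN'
          · have : i = 0 := by omega
            subst this
            rw [canningsStep_0 hw, if_neg (by omega)]
          · have : i = N := by omega
            subst this
            rw [canningsStep_top hw hs0 hs1, if_neg (by omega)]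
        rw [this, mul_zero]
    calc ∑ i ∈ range (N + 1), ∑ j ∈ Finset.Ico 1 N,
          canningsProb N s μ g k i * canningsStep N s μ i j
        ≤ ∑ i ∈ range (N + 1),
          (if i ∈ Finset.Ico 1 N then canningsProb N s μ g k i * (1 - 1/2^N) else 0) :=
          Finset.sum_le_sum hb
      _ = ∑ i ∈ range (N + 1) ∩ Finset.Ico 1 N, canningsProb N s μ g k i * (1 - 1/2^N) :=
          Finset.sum_ite_mem _ _ _
      _ = ∑ i ∈ Finset.Ico 1 N, canningsProb N s μ g k i * (1 - 1/2^N) := by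
          congr 1
          apply Finset.inter_eq_right.mpr
          intro x hx
          simp only [Finset.mem_Ico] at hx
          simp only [Finset.mem_range]
          omega
      _ = (∑ i ∈ Finset.Ico 1 N, canningsProb N s μ g k i) * (1 - 1/2^N) := by
          rw [Finset.sum_mul]
      _ ≤ (1 - 1/2^N) ^ g * (1 - 1/2^N) := by
          apply mul_le_mul_of_nonneg_right ih
          linarith
      _ = (1 - 1/2^N) ^ (g + 1) := by ring

end Cannings

section Exch
variable {N : ℕ} {μ : Measure (ℕ → ℝ)}

lemma perm_invariance (hw : IsWeights N μ) (σ : Equiv.Perm ℕ)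
    (hσ : ∀ i, N ≤ i → σ i = i) (U : Finset ℕ) (h : ℕ) :
    ∫ w, (∑ x ∈ U, w x) ^ h ∂μ = ∫ w, (∑ y ∈ U.image (⇑σ), w y) ^ h ∂μ := by
  have hmap := hw.2.2 σ hσ
  have hφ : Measurable (fun w : ℕ → ℝ => w ∘ σ) :=
    measurable_pi_lambda _ (fun i => measurable_pi_apply (σ i))
  conv_lhs => rw [← hmap]
  rw [integral_map hφ.aemeasurable ((meas_sumT U).pow_const h).aestronglyMeasurable]
  apply integral_congr_ae
  filter_upwards [] with w
  simp only [Function.comp]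
  rw [Finset.sum_image (fun x _ y _ hxy => σ.injective hxy)]

lemma image_swap {T : Finset ℕ} {i j : ℕ} (hi : i ∈ T) (hj : j ∉ T) :
    T.image (⇑(Equiv.swap i j)) = insert j (T.erase i) := by
  ext x
  simp only [Finset.mem_image, Finset.mem_insert, Finset.mem_erase]
  constructor
  · rintro ⟨y, hy, rfl⟩
    rcases eq_or_ne y i with rfl | hyi
    · left; exact Equiv.swap_apply_left y j
    · right
      have hyj : y ≠ j := fun e => hj (e ▸ hy)
      rw [Equiv.swap_apply_of_ne_of_ne hyi hyj]
      exact ⟨hyi, hy⟩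
  · rintro (rfl | ⟨hxi, hxT⟩)
    · exact ⟨i, hi, Equiv.swap_apply_left i x⟩
    · exact ⟨x, hxT, Equiv.swap_apply_of_ne_of_ne hxi (fun e => hj (e ▸ hxT))⟩

lemma exch_aux (hw : IsWeights N μ) (h : ℕ) :
    ∀ n : ℕ, ∀ T : Finset ℕ, T ⊆ range N → (T \ range T.card).card = n →
    ∫ w, (∑ x ∈ T, w x) ^ h ∂μ = ∫ w, (∑ x ∈ range T.card, w x) ^ h ∂μ := by
  intro n
  induction n with
  | zero =>
    intro T hT hcard
    have hsub : T ⊆ range T.card := by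
      intro x hx
      by_contra hx'
      have : x ∈ T \ range T.card := Finset.mem_sdiff.mpr ⟨hx, hx'⟩
      rw [Finset.card_eq_zero.mp hcard] at this
      exact absurd this (Finset.notMem_empty x)
    have : T = range T.card :=
      Finset.eq_of_subset_of_card_le hsub (by rw [Finset.card_range])
    rw [← this]
  | succ n ih =>
    intro T hT hcard
    set t := T.card with ht
    have hne : (T \ range t).Nonempty := by
      rw [← Finset.card_pos, hcard]; omega
    obtain ⟨i, hi⟩ := hne
    have hiT : i ∈ T := (Finset.mem_sdiff.mp hi).1
    have hit : i ∉ range t := (Finset.mem_sdiff.mp hi).2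
    have hne2 : (range t \ T).Nonempty := by
      by_contra hcon
      rw [Finset.not_nonempty_iff_eq_empty, Finset.sdiff_eq_empty_iff_subset] at hcon
      have := Finset.eq_of_subset_of_card_le hcon (by rw [Finset.card_range])
      rw [this] at hit
      exact hit hiT
    obtain ⟨j, hj⟩ := hne2
    have hjt : j ∈ range t := (Finset.mem_sdiff.mp hj).1
    have hjT : j ∉ T := (Finset.mem_sdiff.mp hj).2
    have htN : t ≤ N := by
      rw [ht, ← Finset.card_range N]
      exact Finset.card_le_card hT
    have hiN : i < N := Finset.mem_range.mp (hT hiT)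
    have hjN : j < N := by
      have := Finset.mem_range.mp hjt; omega
    set T' := insert j (T.erase i) with hT'
    have hjE : j ∉ T.erase i := fun hc => hjT (Finset.mem_of_mem_erase hc)
    have hcard' : T'.card = t := by
      rw [hT', Finset.card_insert_of_notMem hjE, Finset.card_erase_of_mem hiT]
      have : 0 < t := Finset.card_pos.mpr ⟨i, hiT⟩
      omega
    have hT'sub : T' ⊆ range N := by
      intro x hx
      rw [hT'] at hx
      rcases Finset.mem_insert.mp hx with rfl | hx'
      · exact Finset.mem_range.mpr hjN
      · exact hT (Finset.mem_of_mem_erase hx')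
    have hsd : T' \ range t = (T \ range t).erase i := by
      ext x
      simp only [hT', Finset.mem_sdiff, Finset.mem_insert, Finset.mem_erase]
      constructor
      · rintro ⟨rfl | ⟨hxi, hxT⟩, hxr⟩
        · exact absurd hjt hxr
        · exact ⟨hxi, hxT, hxr⟩
      · rintro ⟨hxi, hxT, hxr⟩
        exact ⟨Or.inr ⟨hxi, hxT⟩, hxr⟩
    have hcard'' : (T' \ range T'.card).card = n := by
      rw [hcard', hsd, Finset.card_erase_of_mem hi, hcard]; omega
    have step1 : ∫ w, (∑ x ∈ T, w x) ^ h ∂μ = ∫ w, (∑ x ∈ T', w x) ^ h ∂μ := by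
      have hij : i ≠ j := by
        intro e; exact hjT (e ▸ hiT)
      have hσ : ∀ x, N ≤ x → Equiv.swap i j x = x := by
        intro x hx
        exact Equiv.swap_apply_of_ne_of_ne (by omega) (by omega)
      have := perm_invariance hw (Equiv.swap i j) hσ T h
      rwa [image_swap hiT hjT] at this
    rw [step1, ih T' hT'sub hcard'', hcard']

lemma exch (hw : IsWeights N μ) (h : ℕ) {T : Finset ℕ} (hT : T ⊆ range N) :
    ∫ w, (∑ x ∈ T, w x) ^ h ∂μ = ∫ w, (∑ x ∈ range T.card, w x) ^ h ∂μ :=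
  exch_aux hw h _ T hT rfl

end Exch

-- === chunk 4 ===
section Casp
variable {N : ℕ} {s : ℝ} {μ : Measure (ℕ → ℝ)}

/-- moments of the partial sums -/
def Mm (μ : Measure (ℕ → ℝ)) (k h : ℕ) : ℝ := ∫ w, (∑ x ∈ range k, w x) ^ h ∂μ

lemma integrable_xT (hw : IsWeights N μ) (h : ℕ) {T : Finset ℕ} (hT : T ⊆ range N) :
    Integrable (fun w => (∑ x ∈ T, w x) ^ h) μ := by
  have : IsProbabilityMeasure μ := hw.1
  refine Integrable.mono' (integrable_const (1:ℝ))
    ((meas_sumT T).pow_const h).aestronglyMeasurable ?_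
  filter_upwards [good_ae hw] with w hg
  rw [Real.norm_eq_abs, abs_pow]
  apply pow_le_one₀ (abs_nonneg _)
  rw [abs_of_nonneg (hg.sumT_nonneg T)]
  exact hg.sumT_le_one hT

lemma Mm_abs_le (hw : IsWeights N μ) {k : ℕ} (hk : k ≤ N) (h : ℕ) :
    |Mm μ k h| ≤ 1 := by
  have : IsProbabilityMeasure μ := hw.1
  have hb : ∀ᵐ w ∂μ, ‖(∑ x ∈ range k, w x) ^ h‖ ≤ 1 := by
    filter_upwards [good_ae hw] with w hg
    rw [Real.norm_eq_abs, abs_pow]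
    apply pow_le_one₀ (abs_nonneg _)
    rw [abs_of_nonneg (hg.sumT_nonneg _)]
    exact hg.sumT_le_one (by intro x hx; simp only [Finset.mem_range] at *; omega)
  calc |Mm μ k h| ≤ ∫ w, ‖(∑ x ∈ range k, w x) ^ h‖ ∂μ := by
        rw [← Real.norm_eq_abs]; exact norm_integral_le_integral_norm _
    _ ≤ ∫ _, (1:ℝ) ∂μ := integral_mono_ae
        ((integrable_xT hw h (by intro x hx; simp only [Finset.mem_range] at *; omega)).norm)
        (integrable_const 1) hb
    _ = 1 := by simp

lemma integral_occ (hw : IsWeights N μ) (h j : ℕ) :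
    ∫ w, occupancy N w h j ∂μ
      = (N.choose j : ℝ) * ∑ m ∈ range (j + 1),
          (j.choose m : ℝ) * ((-1 : ℝ) ^ (j - m) * Mm μ m h) := by
  unfold occupancy
  have hsubT : ∀ S ∈ (range N).powersetCard j, ∀ T ∈ S.powerset, T ⊆ range N := by
    intro S hS T hT
    exact (Finset.mem_powerset.mp hT).trans (Finset.mem_powersetCard.mp hS).1
  have hint : ∀ S ∈ (range N).powersetCard j,
      Integrable (fun w => ∑ T ∈ S.powerset,
        (-1 : ℝ) ^ (j - T.card) * (∑ i ∈ T, w i) ^ h) μ := by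
    intro S hS
    apply integrable_finset_sum
    intro T hT
    exact ((integrable_xT hw h (hsubT S hS T hT)).const_mul _)
  rw [integral_finset_sum _ hint]
  have e1 : ∀ S ∈ (range N).powersetCard j,
      ∫ w, (∑ T ∈ S.powerset, (-1 : ℝ) ^ (j - T.card) * (∑ i ∈ T, w i) ^ h) ∂μ
        = ∑ m ∈ range (j + 1), (j.choose m : ℝ) * ((-1 : ℝ) ^ (j - m) * Mm μ m h) := by
    intro S hS
    rw [integral_finset_sum _ (fun T hT => (integrable_xT hw h (hsubT S hS T hT)).const_mul _)]
    have e2 : ∀ T ∈ S.powerset,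
        ∫ w, (-1 : ℝ) ^ (j - T.card) * (∑ i ∈ T, w i) ^ h ∂μ
          = (-1 : ℝ) ^ (j - T.card) * Mm μ T.card h := by
      intro T hT
      rw [integral_const_mul]
      congr 1
      exact exch hw h (hsubT S hS T hT)
    rw [Finset.sum_congr rfl e2]
    have := Finset.sum_powerset_apply_card
      (fun m => (-1 : ℝ) ^ (j - m) * Mm μ m h) (x := S)
    rw [this, (Finset.mem_powersetCard.mp hS).2]
    exact Finset.sum_congr rfl fun m _ => by rw [nsmul_eq_mul]
  rw [Finset.sum_congr rfl e1, Finset.sum_const, Finset.card_powersetCard, Finset.card_range,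
    nsmul_eq_mul]

/-- the alternating-sum coefficient identity -/
lemma coeff_alternating {k m : ℕ} (hk : k ≤ N) (hm : m ≤ N) :
    ∑ j ∈ range (N + 1), (k.choose j : ℝ) * (j.choose m : ℝ) * (-1 : ℝ) ^ (j - m)
      = if m = k then 1 else 0 := by
  rcases lt_or_ge k m with hlt | hge
  · rw [if_neg (by omega)]
    apply Finset.sum_eq_zero
    intro j hj
    rcases lt_or_ge j m with h1 | h2
    · rw [Nat.choose_eq_zero_of_lt h1]; ring
    · rw [Nat.choose_eq_zero_of_lt (by omega : k < j)]; ring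
  · have hsub : ∑ j ∈ range (N + 1), (k.choose j : ℝ) * (j.choose m : ℝ) * (-1 : ℝ) ^ (j - m)
        = ∑ j ∈ Finset.Ico m (k + 1), (k.choose j : ℝ) * (j.choose m : ℝ) * (-1:ℝ) ^ (j - m) := by
      refine (Finset.sum_subset (fun x hx => ?_) (fun j hj hj' => ?_)).symm
      · simp only [Finset.mem_Ico, Finset.mem_range] at *; omega
      · simp only [Finset.mem_Ico, Finset.mem_range, not_and, not_lt] at hj hj'
        rcases lt_or_ge j m with h1 | h2
        · rw [Nat.choose_eq_zero_of_lt h1]; ring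
        · rw [Nat.choose_eq_zero_of_lt (by omega : k < j)]; ring
    rw [hsub, Finset.sum_Ico_eq_sum_range]
    have hkm : k + 1 - m = (k - m) + 1 := by omega
    rw [hkm]
    have e3 : ∀ u ∈ range ((k - m) + 1),
        (k.choose (m + u) : ℝ) * ((m + u).choose m : ℝ) * (-1 : ℝ) ^ (m + u - m)
          = (k.choose m : ℝ) * ((-1 : ℝ) ^ u * ((k - m).choose u : ℝ)) := by
      intro u hu
      simp only [Finset.mem_range] at hu
      have hmu : m + u ≤ k := by omega
      have hc : k.choose (m + u) * (m + u).choose m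
          = k.choose m * (k - m).choose (m + u - m) := Nat.choose_mul (by omega)
      have hc' : (k.choose (m + u) : ℝ) * ((m + u).choose m : ℝ)
          = (k.choose m : ℝ) * ((k - m).choose u : ℝ) := by
        rw [show m + u - m = u by omega] at hc
        exact_mod_cast hc
      rw [show m + u - m = u by omega, hc']
      ring
    rw [Finset.sum_congr rfl e3, ← Finset.mul_sum]
    have halt : ∑ u ∈ range ((k - m) + 1), (-1 : ℝ) ^ u * ((k - m).choose u : ℝ)
        = if k - m = 0 then 1 else 0 := by
      have := Int.alternating_sum_range_choose (n := k - m)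
      have := congrArg (Int.cast : ℤ → ℝ) this
      push_cast at this
      exact this
    rw [halt]
    rcases eq_or_ne m k with rfl | hne
    · rw [if_pos rfl, if_pos (by omega)]
      simp
    · rw [if_neg (by omega), if_neg hne, mul_zero]

/-- the key occupancy-duality computation -/
lemma occH (hw : IsWeights N μ) {k : ℕ} (hk : k ≤ N) (h : ℕ) :
    ∑ j ∈ range (N + 1), (∫ w, occupancy N w h j ∂μ) * Hd N k j = Mm μ k h := by
  have e1 : ∀ j ∈ range (N + 1),
      (∫ w, occupancy N w h j ∂μ) * Hd N k j
        = ∑ m ∈ range (j + 1),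
            (k.choose j : ℝ) * ((j.choose m : ℝ) * ((-1 : ℝ) ^ (j - m) * Mm μ m h)) := by
    intro j hj
    have hjN : j ≤ N := Nat.lt_succ_iff.mp (Finset.mem_range.mp hj)
    have hCj : (0:ℝ) < (N.choose j : ℝ) := by exact_mod_cast Nat.choose_pos hjN
    rw [integral_occ hw h j]
    unfold Hd
    have key : ∀ Sv : ℝ, ((N.choose j : ℝ) * Sv) * ((k.choose j : ℝ) / (N.choose j : ℝ))
        = Sv * (k.choose j : ℝ) := by
      intro Sv; field_simp
    rw [key, Finset.sum_mul]
    exact Finset.sum_congr rfl fun m _ => by ring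
  rw [Finset.sum_congr rfl e1]
  have e2 : ∀ j ∈ range (N + 1),
      ∑ m ∈ range (j + 1),
          (k.choose j : ℝ) * ((j.choose m : ℝ) * ((-1 : ℝ) ^ (j - m) * Mm μ m h))
        = ∑ m ∈ range (N + 1),
          (k.choose j : ℝ) * ((j.choose m : ℝ) * ((-1 : ℝ) ^ (j - m) * Mm μ m h)) := by
    intro j hj
    apply Finset.sum_subset
    · intro x hx
      simp only [Finset.mem_range] at *
      omega
    · intro m hm hm'
      simp only [Finset.mem_range, not_lt] at hm hm'
      rw [Nat.choose_eq_zero_of_lt (by omega : j < m)]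
      push_cast; ring
  rw [Finset.sum_congr rfl e2, Finset.sum_comm]
  have e4 : ∀ m ∈ range (N + 1),
      ∑ j ∈ range (N + 1),
          (k.choose j : ℝ) * ((j.choose m : ℝ) * ((-1 : ℝ) ^ (j - m) * Mm μ m h))
        = (if m = k then 1 else 0) * Mm μ m h := by
    intro m hm
    have : ∑ j ∈ range (N + 1),
        (k.choose j : ℝ) * ((j.choose m : ℝ) * ((-1:ℝ) ^ (j - m) * Mm μ m h))
        = (∑ j ∈ range (N + 1), (k.choose j : ℝ) * (j.choose m : ℝ) * (-1:ℝ) ^ (j - m))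
          * Mm μ m h := by
      rw [Finset.sum_mul]
      exact Finset.sum_congr rfl fun j _ => by ring
    rw [this, coeff_alternating hk (Nat.lt_succ_iff.mp (Finset.mem_range.mp hm))]
  rw [Finset.sum_congr rfl e4]
  simp only [ite_mul, one_mul, zero_mul]
  rw [Finset.sum_ite_eq' (range (N+1)) k (fun m => Mm μ m h)]
  rw [if_pos (Finset.mem_range.mpr (Nat.lt_succ_iff.mpr hk))]

end Casp

-- chunk 5
section NB
variable {s : ℝ}

lemma negbinom_nonneg (hs0 : 0 < s) (hs1 : s < 1) (a h : ℕ) : 0 ≤ negbinom s a h := by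
  unfold negbinom
  split
  · have h1 : (0:ℝ) ≤ 1 - s := by linarith
    exact mul_nonneg (mul_nonneg (by positivity) (pow_nonneg h1 a)) (pow_nonneg hs0.le _)
  · exact le_refl 0

lemma negbinom_hasSum (hs0 : 0 < s) (hs1 : s < 1) {a : ℕ} (ha : 1 ≤ a) {x : ℝ}
    (hx0 : 0 ≤ x) (hx1 : x ≤ 1) :
    HasSum (fun h => negbinom s a h * x ^ h) (((1 - s) * x / (1 - s * x)) ^ a) := by
  obtain ⟨b, rfl⟩ : ∃ b, a = b + 1 := ⟨a - 1, by omega⟩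
  have hsx : s * x < 1 := by nlinarith
  have hr : ‖s * x‖ < 1 := by
    rw [Real.norm_eq_abs, abs_of_nonneg (by positivity)]; exact hsx
  have h1 := hasSum_choose_mul_geometric_of_norm_lt_one (𝕜 := ℝ) b hr
  have h2 := h1.mul_left (((1 - s) * x) ^ (b + 1))
  have heq : ∀ d : ℕ, ((1 - s) * x) ^ (b + 1) * (((d + b).choose b : ℝ) * (s * x) ^ d)
      = negbinom s (b + 1) (d + (b + 1)) * x ^ (d + (b + 1)) := by
    intro d
    unfold negbinom
    rw [if_pos (by omega)]
    rw [show d + (b + 1) - 1 = d + b by omega, show b + 1 - 1 = b by omega,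
      show d + (b + 1) - (b + 1) = d by omega]
    rw [mul_pow, mul_pow, pow_add]
    ring
  have h3 : HasSum (fun d => negbinom s (b + 1) (d + (b + 1)) * x ^ (d + (b + 1)))
      (((1 - s) * x) ^ (b + 1) * (1 / (1 - s * x) ^ (b + 1))) := by
    simpa only [heq] using h2
  have hzero : ∑ i ∈ range (b + 1), negbinom s (b + 1) i * x ^ i = 0 := by
    apply Finset.sum_eq_zero
    intro i hi
    simp only [Finset.mem_range] at hi
    simp only [negbinom, if_neg (by omega : ¬ b + 1 ≤ i), zero_mul]
  refine (hasSum_nat_add_iff' (b + 1)).1 ?_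
  rw [hzero, sub_zero]
  have hval : ((1 - s) * x / (1 - s * x)) ^ (b + 1)
      = ((1 - s) * x) ^ (b + 1) * (1 / (1 - s * x) ^ (b + 1)) := by
    rw [div_pow, mul_one_div]
  rw [hval]
  exact h3

lemma negbinom_summable (hs0 : 0 < s) (hs1 : s < 1) {a : ℕ} (ha : 1 ≤ a) :
    Summable (negbinom s a) := by
  have := negbinom_hasSum hs0 hs1 ha (x := 1) zero_le_one le_rfl
  simp only [one_pow, mul_one] at this
  exact this.summable

end NB

section CaspD
variable {N : ℕ} {s : ℝ} {μ : Measure (ℕ → ℝ)}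

lemma occ_abs_bound {w : ℕ → ℝ} (hg : Good N w) (h j : ℕ) :
    |occupancy N w h j| ≤ (4 : ℝ) ^ N := by
  unfold occupancy
  calc |∑ S ∈ (range N).powersetCard j, ∑ T ∈ S.powerset,
        (-1 : ℝ) ^ (j - T.card) * (∑ i ∈ T, w i) ^ h|
      ≤ ∑ S ∈ (range N).powersetCard j, |∑ T ∈ S.powerset,
        (-1 : ℝ) ^ (j - T.card) * (∑ i ∈ T, w i) ^ h| := Finset.abs_sum_le_sum_abs _ _
    _ ≤ ∑ S ∈ (range N).powersetCard j, ∑ T ∈ S.powerset,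
        |(-1 : ℝ) ^ (j - T.card) * (∑ i ∈ T, w i) ^ h| :=
        Finset.sum_le_sum fun S _ => Finset.abs_sum_le_sum_abs _ _
    _ ≤ ∑ S ∈ (range N).powersetCard j, ∑ T ∈ S.powerset, 1 := by
        apply Finset.sum_le_sum
        intro S hS
        apply Finset.sum_le_sum
        intro T hT
        have hTsub : T ⊆ range N :=
          (Finset.mem_powerset.mp hT).trans (Finset.mem_powersetCard.mp hS).1
        rw [abs_mul, abs_pow, abs_pow, abs_neg, abs_one, one_pow, one_mul]
        apply pow_le_one₀ (abs_nonneg _)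
        rw [abs_of_nonneg (hg.sumT_nonneg T)]
        exact hg.sumT_le_one hTsub
    _ ≤ ∑ S ∈ (range N).powersetCard j, (2 : ℝ) ^ N := by
        apply Finset.sum_le_sum
        intro S hS
        rw [Finset.sum_const, nsmul_eq_mul, mul_one, Finset.card_powerset]
        have : S.card ≤ N := by
          have := (Finset.mem_powersetCard.mp hS).1
          calc S.card ≤ (range N).card := Finset.card_le_card this
            _ = N := Finset.card_range N
        exact_mod_cast Nat.pow_le_pow_right (by norm_num) this
    _ ≤ (2:ℝ) ^ N * 2 ^ N := by
        rw [Finset.sum_const, nsmul_eq_mul]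
        have hcard : ((range N).powersetCard j).card ≤ 2 ^ N := by
          calc ((range N).powersetCard j).card ≤ (range N).powerset.card :=
              Finset.card_le_card (fun S hS =>
                Finset.mem_powerset.mpr (Finset.mem_powersetCard.mp hS).1)
            _ = 2 ^ N := by rw [Finset.card_powerset, Finset.card_range]
        have hcR : (((range N).powersetCard j).card : ℝ) ≤ (2:ℝ) ^ N := by
          exact_mod_cast hcard
        exact mul_le_mul_of_nonneg_right hcR (by positivity)
    _ = (4:ℝ) ^ N := by rw [← mul_pow]; norm_num

lemma integrable_occ (hw : IsWeights N μ) (h j : ℕ) :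
    Integrable (fun w => occupancy N w h j) μ := by
  unfold occupancy
  apply integrable_finset_sum
  intro S hS
  apply integrable_finset_sum
  intro T hT
  exact (integrable_xT hw h
    ((Finset.mem_powerset.mp hT).trans (Finset.mem_powersetCard.mp hS).1)).const_mul _

lemma integral_occ_abs_le (hw : IsWeights N μ) (h j : ℕ) :
    |∫ w, occupancy N w h j ∂μ| ≤ (4:ℝ) ^ N := by
  have : IsProbabilityMeasure μ := hw.1
  calc |∫ w, occupancy N w h j ∂μ| ≤ ∫ w, ‖occupancy N w h j‖ ∂μ := by
        rw [← Real.norm_eq_abs]; exact norm_integral_le_integral_norm _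
    _ ≤ ∫ _, (4:ℝ) ^ N ∂μ := by
        apply integral_mono_ae (integrable_occ hw h j).norm (integrable_const _)
        filter_upwards [good_ae hw] with w hg
        rw [Real.norm_eq_abs]
        exact occ_abs_bound hg h j
    _ = (4:ℝ) ^ N := by simp

/-- D2 -/
lemma caspStep_H (hw : IsWeights N μ) (hs0 : 0 < s) (hs1 : s < 1)
    {k a : ℕ} (hk : k ≤ N) (ha1 : 1 ≤ a) :
    ∑ j ∈ range (N + 1), caspStep N s μ a j * Hd N k j
      = ∑' h : ℕ, negbinom s a h * Mm μ k h := by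
  have hsummand : ∀ j ∈ range (N + 1), Summable (fun h : ℕ =>
      negbinom s a h * (∫ w, occupancy N w h j ∂μ) * Hd N k j) := by
    intro j _
    apply Summable.of_norm_bounded (g := fun h => negbinom s a h * ((4:ℝ) ^ N))
      ((negbinom_summable hs0 hs1 ha1).mul_right _)
    intro h
    rw [Real.norm_eq_abs, abs_mul, abs_mul, abs_of_nonneg (negbinom_nonneg hs0 hs1 a h),
      abs_of_nonneg (Hd_nonneg N k j)]
    calc negbinom s a h * |∫ w, occupancy N w h j ∂μ| * Hd N k j
        ≤ negbinom s a h * ((4:ℝ)^N) * 1 := by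
          apply mul_le_mul
          · exact mul_le_mul_of_nonneg_left (integral_occ_abs_le hw h j)
              (negbinom_nonneg hs0 hs1 a h)
          · exact Hd_le_one j hk
          · exact Hd_nonneg N k j
          · exact mul_nonneg (negbinom_nonneg hs0 hs1 a h) (by positivity)
      _ = negbinom s a h * ((4:ℝ)^N) := by rw [mul_one]
  calc ∑ j ∈ range (N + 1), caspStep N s μ a j * Hd N k j
      = ∑ j ∈ range (N + 1), ∑' h : ℕ,
          negbinom s a h * (∫ w, occupancy N w h j ∂μ) * Hd N k j := by
        apply Finset.sum_congr rfl
        intro j _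
        unfold caspStep
        rw [tsum_mul_right]
    _ = ∑' h : ℕ, ∑ j ∈ range (N + 1),
          negbinom s a h * (∫ w, occupancy N w h j ∂μ) * Hd N k j :=
        (Summable.tsum_finsetSum hsummand).symm
    _ = ∑' h : ℕ, negbinom s a h * Mm μ k h := by
        apply tsum_congr
        intro h
        rw [← occH hw hk h, Finset.mul_sum]
        apply Finset.sum_congr rfl
        intro j _
        ring

/-- D3 -/
lemma tsum_negbinom_Mm (hw : IsWeights N μ) (hs0 : 0 < s) (hs1 : s < 1)
    {k a : ℕ} (hk : k ≤ N) (ha1 : 1 ≤ a) :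
    ∑' h : ℕ, negbinom s a h * Mm μ k h = ∫ w, selProb N s k w ^ a ∂μ := by
  have : IsProbabilityMeasure μ := hw.1
  have hrsub : (range k : Finset ℕ) ⊆ range N := by
    intro x hx; simp only [Finset.mem_range] at *; omega
  have hF_int : ∀ h : ℕ, Integrable
      (fun w => negbinom s a h * (∑ x ∈ range k, w x) ^ h) μ :=
    fun h => (integrable_xT hw h hrsub).const_mul _
  have hF_sum : Summable (fun h : ℕ =>
      ∫ w, ‖negbinom s a h * (∑ x ∈ range k, w x) ^ h‖ ∂μ) := by
    apply Summable.of_nonneg_of_le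
      (fun h => integral_nonneg fun w => norm_nonneg _)
      (fun h => ?_) (negbinom_summable hs0 hs1 ha1)
    calc ∫ w, ‖negbinom s a h * (∑ x ∈ range k, w x) ^ h‖ ∂μ
        ≤ ∫ _, negbinom s a h ∂μ := by
          apply integral_mono_ae (hF_int h).norm (integrable_const _)
          filter_upwards [good_ae hw] with w hg
          rw [Real.norm_eq_abs, abs_mul, abs_of_nonneg (negbinom_nonneg hs0 hs1 a h), abs_pow]
          calc negbinom s a h * |∑ x ∈ range k, w x| ^ h
              ≤ negbinom s a h * 1 := by
                apply mul_le_mul_of_nonneg_left _ (negbinom_nonneg hs0 hs1 a h)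
                apply pow_le_one₀ (abs_nonneg _)
                rw [abs_of_nonneg (hg.sumT_nonneg _)]
                exact hg.sumT_le_one hrsub
            _ = negbinom s a h := mul_one _
      _ = negbinom s a h := by simp
  have key := integral_tsum_of_summable_integral_norm hF_int hF_sum
  calc ∑' h : ℕ, negbinom s a h * Mm μ k h
      = ∑' h : ℕ, ∫ w, negbinom s a h * (∑ x ∈ range k, w x) ^ h ∂μ := by
        apply tsum_congr
        intro h
        rw [integral_const_mul]
        rfl
    _ = ∫ w, (∑' h : ℕ, negbinom s a h * (∑ x ∈ range k, w x) ^ h) ∂μ := key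
    _ = ∫ w, selProb N s k w ^ a ∂μ := by
        apply integral_congr_ae
        filter_upwards [good_ae hw] with w hg
        have hx0 : 0 ≤ ∑ x ∈ range k, w x := hg.sumT_nonneg _
        have hx1 : ∑ x ∈ range k, w x ≤ 1 := hg.sumT_le_one hrsub
        rw [(negbinom_hasSum hs0 hs1 ha1 hx0 hx1).tsum_eq, hg.selProb_eq hk]

/-- one-step duality -/
lemma oneStep (hw : IsWeights N μ) (hs0 : 0 < s) (hs1 : s < 1)
    {k a : ℕ} (hk : k ≤ N) (ha1 : 1 ≤ a) (ha : a ≤ N) :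
    ∑ j ∈ range (N + 1), canningsStep N s μ k j * Hd N j a
      = ∑ j ∈ range (N + 1), caspStep N s μ a j * Hd N k j := by
  rw [canningsStep_H hw hs0 hs1 hk ha, caspStep_H hw hs0 hs1 hk ha1,
    tsum_negbinom_Mm hw hs0 hs1 hk ha1]

end CaspD

section Dual
variable {N : ℕ} {s : ℝ} {μ : Measure (ℕ → ℝ)}
-- chunk 6
lemma caspStep_gt {a j : ℕ} (hj : N < j) : caspStep N s μ a j = 0 := by
  unfold caspStep
  have hocc : ∀ (w : ℕ → ℝ) (h : ℕ), occupancy N w h j = 0 := by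
    intro w h
    unfold occupancy
    rw [Finset.powersetCard_eq_empty.mpr (by rwa [Finset.card_range])]
    exact Finset.sum_empty
  have : ∀ h : ℕ, negbinom s a h * ∫ w, occupancy N w h j ∂μ = 0 := by
    intro h
    simp only [hocc]
    simp
  rw [tsum_congr this, tsum_zero]

lemma caspStep_state0 {a : ℕ} (ha1 : 1 ≤ a) : caspStep N s μ a 0 = 0 := by
  unfold caspStep
  have : ∀ h : ℕ, negbinom s a h * ∫ w, occupancy N w h 0 ∂μ = 0 := by
    intro h
    rcases Nat.eq_zero_or_pos h with rfl | hh
    · have : negbinom s a 0 = 0 := by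
        unfold negbinom
        rw [if_neg (by omega)]
      rw [this, zero_mul]
    · have hocc : ∀ w : ℕ → ℝ, occupancy N w h 0 = 0 := by
        intro w
        unfold occupancy
        rw [Finset.powersetCard_zero, Finset.sum_singleton, Finset.powerset_empty,
          Finset.sum_singleton]
        simp [zero_pow hh.ne']
      simp only [hocc]
      simp
  rw [tsum_congr this, tsum_zero]

lemma caspProb_front (g : ℕ) :
    ∀ a ≤ N, ∀ j, caspProb N s μ (g + 1) a j
      = ∑ i ∈ range (N + 1), caspStep N s μ a i * caspProb N s μ g i j := by
  induction g with
  | zero =>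
    intro a ha j
    show ∑ i ∈ range (N + 1), caspProb N s μ 0 a i * caspStep N s μ i j = _
    have hL : ∑ i ∈ range (N + 1), caspProb N s μ 0 a i * caspStep N s μ i j
        = caspStep N s μ a j := by
      show ∑ i ∈ range (N + 1), (if i = a then (1:ℝ) else 0) * caspStep N s μ i j = _
      simp only [ite_mul, one_mul, zero_mul]
      rw [Finset.sum_ite_eq' (range (N + 1)) a (fun i => caspStep N s μ i j),
        if_pos (Finset.mem_range.mpr (Nat.lt_succ_iff.mpr ha))]
    have hR : ∑ i ∈ range (N + 1), caspStep N s μ a i * caspProb N s μ 0 i j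
        = if j ∈ range (N + 1) then caspStep N s μ a j else 0 := by
      show ∑ i ∈ range (N + 1), caspStep N s μ a i * (if j = i then (1:ℝ) else 0) = _
      simp only [mul_ite, mul_one, mul_zero]
      exact Finset.sum_ite_eq (range (N + 1)) j (fun i => caspStep N s μ a i)
    rw [hL, hR]
    split
    · rfl
    · next hj =>
      exact caspStep_gt (by simp only [Finset.mem_range] at hj; omega)
  | succ g ih =>
    intro a ha j
    show ∑ i ∈ range (N + 1), caspProb N s μ (g + 1) a i * caspStep N s μ i j = _
    have e1 : ∀ i ∈ range (N + 1),
        caspProb N s μ (g + 1) a i * caspStep N s μ i j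
          = ∑ l ∈ range (N + 1),
              caspStep N s μ a l * (caspProb N s μ g l i * caspStep N s μ i j) := by
      intro i _
      rw [ih a ha i, Finset.sum_mul]
      exact Finset.sum_congr rfl fun l _ => by ring
    rw [Finset.sum_congr rfl e1, Finset.sum_comm]
    apply Finset.sum_congr rfl
    intro l _
    rw [← Finset.mul_sum]
    rfl

lemma caspProb_zero_state (g : ℕ) {a : ℕ} (ha1 : 1 ≤ a) (ha : a ≤ N) :
    caspProb N s μ g a 0 = 0 := by
  induction g generalizing a with
  | zero =>
    show (if (0:ℕ) = a then (1:ℝ) else 0) = 0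
    rw [if_neg (by omega)]
  | succ g ih =>
    rw [caspProb_front g a ha 0]
    apply Finset.sum_eq_zero
    intro i hi
    rcases Nat.eq_zero_or_pos i with rfl | hi1
    · rw [caspStep_state0 ha1, zero_mul]
    · rw [ih hi1 (Nat.lt_succ_iff.mp (Finset.mem_range.mp hi)), mul_zero]

/-- the full duality -/
lemma duality (hw : IsWeights N μ) (hs0 : 0 < s) (hs1 : s < 1) (g : ℕ) :
    ∀ k ≤ N, ∀ a, 1 ≤ a → a ≤ N →
    ∑ j ∈ range (N + 1), canningsProb N s μ g k j * Hd N j a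
      = ∑ i ∈ range (N + 1), caspProb N s μ g a i * Hd N k i := by
  induction g with
  | zero =>
    intro k hk a ha1 ha
    show ∑ j ∈ range (N + 1), (if j = k then (1:ℝ) else 0) * Hd N j a
      = ∑ i ∈ range (N + 1), (if i = a then (1:ℝ) else 0) * Hd N k i
    simp only [ite_mul, one_mul, zero_mul]
    rw [Finset.sum_ite_eq' (range (N + 1)) k (fun j => Hd N j a),
      Finset.sum_ite_eq' (range (N + 1)) a (fun i => Hd N k i),
      if_pos (Finset.mem_range.mpr (Nat.lt_succ_iff.mpr hk)),
      if_pos (Finset.mem_range.mpr (Nat.lt_succ_iff.mpr ha))]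
  | succ g ih =>
    intro k hk a ha1 ha
    have step1 : ∑ j ∈ range (N + 1), canningsProb N s μ (g + 1) k j * Hd N j a
        = ∑ l ∈ range (N + 1), canningsProb N s μ g k l
            * (∑ j ∈ range (N + 1), canningsStep N s μ l j * Hd N j a) := by
      show ∑ j ∈ range (N + 1), (∑ l ∈ range (N + 1),
          canningsProb N s μ g k l * canningsStep N s μ l j) * Hd N j a = _
      have e : ∀ j ∈ range (N + 1), (∑ l ∈ range (N + 1),
          canningsProb N s μ g k l * canningsStep N s μ l j) * Hd N j a
          = ∑ l ∈ range (N + 1),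
              canningsProb N s μ g k l * (canningsStep N s μ l j * Hd N j a) := by
        intro j _
        rw [Finset.sum_mul]
        exact Finset.sum_congr rfl fun l _ => by ring
      rw [Finset.sum_congr rfl e, Finset.sum_comm]
      exact Finset.sum_congr rfl fun l _ => by rw [Finset.mul_sum]
    rw [step1]
    have step2 : ∀ l ∈ range (N + 1),
        canningsProb N s μ g k l
            * (∑ j ∈ range (N + 1), canningsStep N s μ l j * Hd N j a)
        = canningsProb N s μ g k l
            * (∑ i ∈ range (N + 1), caspStep N s μ a i * Hd N l i) := by
      intro l hl
      rw [oneStep hw hs0 hs1 (Nat.lt_succ_iff.mp (Finset.mem_range.mp hl)) ha1 ha]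
    rw [Finset.sum_congr rfl step2]
    have step3 : ∑ l ∈ range (N + 1), canningsProb N s μ g k l
          * (∑ i ∈ range (N + 1), caspStep N s μ a i * Hd N l i)
        = ∑ i ∈ range (N + 1), caspStep N s μ a i
          * (∑ l ∈ range (N + 1), canningsProb N s μ g k l * Hd N l i) := by
      have e : ∀ l ∈ range (N + 1), canningsProb N s μ g k l
          * (∑ i ∈ range (N + 1), caspStep N s μ a i * Hd N l i)
          = ∑ i ∈ range (N + 1),
              caspStep N s μ a i * (canningsProb N s μ g k l * Hd N l i) := by
        intro l _
        rw [Finset.mul_sum]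
        exact Finset.sum_congr rfl fun i _ => by ring
      rw [Finset.sum_congr rfl e, Finset.sum_comm]
      exact Finset.sum_congr rfl fun i _ => by rw [Finset.mul_sum]
    rw [step3]
    have step4 : ∀ i ∈ range (N + 1),
        caspStep N s μ a i * (∑ l ∈ range (N + 1), canningsProb N s μ g k l * Hd N l i)
        = caspStep N s μ a i
            * (∑ m ∈ range (N + 1), caspProb N s μ g i m * Hd N k m) := by
      intro i hi
      rcases Nat.eq_zero_or_pos i with rfl | hi1
      · rw [caspStep_state0 ha1, zero_mul, zero_mul]
      · rw [ih k hk i hi1 (Nat.lt_succ_iff.mp (Finset.mem_range.mp hi))]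
    rw [Finset.sum_congr rfl step4]
    have step5 : ∑ i ∈ range (N + 1), caspStep N s μ a i
          * (∑ m ∈ range (N + 1), caspProb N s μ g i m * Hd N k m)
        = ∑ m ∈ range (N + 1),
            (∑ i ∈ range (N + 1), caspStep N s μ a i * caspProb N s μ g i m) * Hd N k m := by
      have e : ∀ i ∈ range (N + 1), caspStep N s μ a i
          * (∑ m ∈ range (N + 1), caspProb N s μ g i m * Hd N k m)
          = ∑ m ∈ range (N + 1),
              caspStep N s μ a i * caspProb N s μ g i m * Hd N k m := by
        intro i _
        rw [Finset.mul_sum]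
        exact Finset.sum_congr rfl fun m _ => by ring
      rw [Finset.sum_congr rfl e, Finset.sum_comm]
      exact Finset.sum_congr rfl fun m _ => by rw [Finset.sum_mul]
    rw [step5]
    apply Finset.sum_congr rfl
    intro m _
    rw [← caspProb_front g a ha m]
end Dual

section A
variable {N : ℕ} {s : ℝ} {μ : Measure (ℕ → ℝ)}
-- chunk 7
lemma nu_stat (ν : ℕ → ℝ)
    (hνstat : ∀ j, ν j = ∑ i ∈ Finset.range (N + 1), ν i * caspStep N s μ i j)
    (g : ℕ) : ∀ j ≤ N, ∑ a ∈ range (N + 1), ν a * caspProb N s μ g a j = ν j := by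
  induction g with
  | zero =>
    intro j hj
    show ∑ a ∈ range (N + 1), ν a * (if j = a then (1:ℝ) else 0) = ν j
    simp only [mul_ite, mul_one, mul_zero]
    rw [Finset.sum_ite_eq (range (N + 1)) j ν,
      if_pos (Finset.mem_range.mpr (Nat.lt_succ_iff.mpr hj))]
  | succ g ih =>
    intro j hj
    show ∑ a ∈ range (N + 1), ν a * (∑ i ∈ range (N + 1),
        caspProb N s μ g a i * caspStep N s μ i j) = ν j
    have e : ∀ a ∈ range (N + 1), ν a * (∑ i ∈ range (N + 1),
        caspProb N s μ g a i * caspStep N s μ i j)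
        = ∑ i ∈ range (N + 1), ν a * caspProb N s μ g a i * caspStep N s μ i j := by
      intro a _
      rw [Finset.mul_sum]
      exact Finset.sum_congr rfl fun i _ => by ring
    rw [Finset.sum_congr rfl e, Finset.sum_comm]
    have e2 : ∀ i ∈ range (N + 1),
        ∑ a ∈ range (N + 1), ν a * caspProb N s μ g a i * caspStep N s μ i j
        = ν i * caspStep N s μ i j := by
      intro i hi
      calc ∑ a ∈ range (N + 1), ν a * caspProb N s μ g a i * caspStep N s μ i j
          = (∑ a ∈ range (N + 1), ν a * caspProb N s μ g a i) * caspStep N s μ i j := by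
            rw [Finset.sum_mul]
        _ = ν i * caspStep N s μ i j := by
            rw [ih i (Nat.lt_succ_iff.mp (Finset.mem_range.mp hi))]
    rw [Finset.sum_congr rfl e2, ← hνstat j]

theorem fixation_probability_eq_expected_casp_equilibrium'
    (N : ℕ) (hN : 1 ≤ N) (μ : Measure (ℕ → ℝ)) (s : ℝ)
    (hw : IsWeights N μ) (hs0 : 0 < s) (hs1 : s < 1)
    (ν : ℕ → ℝ)
    (hν0 : ∀ j, 0 ≤ ν j) (hνzero : ν 0 = 0) (hνsupp : ∀ j, N < j → ν j = 0)
    (hνsum : ∑ j ∈ Finset.range (N + 1), ν j = 1)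
    (hνstat : ∀ j, ν j = ∑ i ∈ Finset.range (N + 1), ν i * caspStep N s μ i j) :
    Tendsto (fun g => canningsProb N s μ g (N - 1) 0) atTop
      (𝓝 (∑ j ∈ Finset.range (N + 1), ν j * ((j : ℝ) / N))) := by
  set L : ℝ := ∑ j ∈ Finset.range (N + 1), ν j * ((j : ℝ) / N) with hL
  set c : ℕ → ℝ := fun j => ∑ a ∈ range (N + 1), ν a * Hd N j a with hc
  have hNR : (0:ℝ) < N := by exact_mod_cast hN
  -- facts about c
  have hc0 : c 0 = 0 := by
    rw [hc]
    apply Finset.sum_eq_zero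
    intro a _
    rcases Nat.eq_zero_or_pos a with rfl | ha
    · rw [hνzero, zero_mul]
    · rw [Hd_zero ha, mul_zero]
  have hcN : c N = 1 := by
    rw [hc, ← hνsum]
    apply Finset.sum_congr rfl
    intro a ha
    rw [Hd_self (Nat.lt_succ_iff.mp (Finset.mem_range.mp ha)), mul_one]
  have hcnn : ∀ j, 0 ≤ c j := by
    intro j
    exact Finset.sum_nonneg fun a _ => mul_nonneg (hν0 a) (Hd_nonneg N j a)
  have hcle : ∀ j ≤ N, c j ≤ 1 := by
    intro j hj
    rw [hc, ← hνsum]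
    apply Finset.sum_le_sum
    intro a _
    calc ν a * Hd N j a ≤ ν a * 1 :=
        mul_le_mul_of_nonneg_left (Hd_le_one a hj) (hν0 a)
      _ = ν a := mul_one _
  -- the conserved quantity
  have hkey : ∀ g, ∑ j ∈ range (N + 1), canningsProb N s μ g (N - 1) j * c j = 1 - L := by
    intro g
    have hkN : N - 1 ≤ N := Nat.sub_le N 1
    calc ∑ j ∈ range (N + 1), canningsProb N s μ g (N - 1) j * c j
        = ∑ j ∈ range (N + 1), ∑ a ∈ range (N + 1),
            ν a * (canningsProb N s μ g (N - 1) j * Hd N j a) := by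
          apply Finset.sum_congr rfl
          intro j _
          rw [hc, Finset.mul_sum]
          exact Finset.sum_congr rfl fun a _ => by ring
      _ = ∑ a ∈ range (N + 1), ν a *
            (∑ j ∈ range (N + 1), canningsProb N s μ g (N - 1) j * Hd N j a) := by
          rw [Finset.sum_comm]
          exact Finset.sum_congr rfl fun a _ => by rw [Finset.mul_sum]
      _ = ∑ a ∈ range (N + 1), ν a *
            (∑ i ∈ range (N + 1), caspProb N s μ g a i * Hd N (N - 1) i) := by
          apply Finset.sum_congr rfl
          intro a ha
          rcases Nat.eq_zero_or_pos a with rfl | ha1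
          · rw [hνzero, zero_mul, zero_mul]
          · rw [duality hw hs0 hs1 g (N - 1) hkN a ha1
              (Nat.lt_succ_iff.mp (Finset.mem_range.mp ha))]
      _ = ∑ i ∈ range (N + 1),
            (∑ a ∈ range (N + 1), ν a * caspProb N s μ g a i) * Hd N (N - 1) i := by
          have e : ∀ a ∈ range (N + 1), ν a *
              (∑ i ∈ range (N + 1), caspProb N s μ g a i * Hd N (N - 1) i)
              = ∑ i ∈ range (N + 1), ν a * caspProb N s μ g a i * Hd N (N - 1) i := by
            intro a _
            rw [Finset.mul_sum]
            exact Finset.sum_congr rfl fun i _ => by ring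
          rw [Finset.sum_congr rfl e, Finset.sum_comm]
          exact Finset.sum_congr rfl fun i _ => by rw [Finset.sum_mul]
      _ = ∑ i ∈ range (N + 1), ν i * Hd N (N - 1) i := by
          apply Finset.sum_congr rfl
          intro i hi
          rw [nu_stat ν hνstat g i (Nat.lt_succ_iff.mp (Finset.mem_range.mp hi))]
      _ = ∑ i ∈ range (N + 1), (ν i - ν i * ((i : ℝ) / N)) := by
          apply Finset.sum_congr rfl
          intro i hi
          rw [Hd_predN hN (Nat.lt_succ_iff.mp (Finset.mem_range.mp hi))]
          field_simp
      _ = 1 - L := by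
          rw [Finset.sum_sub_distrib, hνsum, hL]
  -- splitting of the index set
  have hsplit : (range (N + 1) : Finset ℕ) = insert 0 (insert N (Finset.Ico 1 N)) := by
    ext x
    simp only [Finset.mem_range, Finset.mem_insert, Finset.mem_Ico]
    omega
  have h0ni : (0:ℕ) ∉ insert N (Finset.Ico 1 N) := by
    simp only [Finset.mem_insert, Finset.mem_Ico]
    omega
  have hNni : N ∉ Finset.Ico 1 N := by
    simp only [Finset.mem_Ico]; omega
  have hkN : N - 1 ≤ N := Nat.sub_le N 1
  -- the quantitative bound
  have hbound : ∀ g, |canningsProb N s μ g (N - 1) 0 - L| ≤ (1 - 1/2^N) ^ g := by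
    intro g
    set u : ℝ := ∑ j ∈ Finset.Ico 1 N, canningsProb N s μ g (N - 1) j with hu
    set R : ℝ := ∑ j ∈ Finset.Ico 1 N, canningsProb N s μ g (N - 1) j * c j with hR
    have hrow := cp_row hw hs0 hs1 g hkN
    rw [hsplit, Finset.sum_insert h0ni, Finset.sum_insert hNni] at hrow
    have hcons := hkey g
    rw [hsplit, Finset.sum_insert h0ni, Finset.sum_insert hNni, hc0, mul_zero, hcN,
      mul_one] at hcons
    -- hcons : 0 + (cpN + R) = 1 - L ; hrow : cp0 + (cpN + u) = 1
    have hR0 : 0 ≤ R := Finset.sum_nonneg fun j _ =>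
      mul_nonneg (cp_nonneg hw hs0 hs1 g _ j) (hcnn j)
    have hRu : R ≤ u := by
      rw [hR, hu]
      apply Finset.sum_le_sum
      intro j hj
      have hjN : j ≤ N := by
        simp only [Finset.mem_Ico] at hj; omega
      calc canningsProb N s μ g (N - 1) j * c j
          ≤ canningsProb N s μ g (N - 1) j * 1 :=
            mul_le_mul_of_nonneg_left (hcle j hjN) (cp_nonneg hw hs0 hs1 g _ j)
        _ = canningsProb N s μ g (N - 1) j := mul_one _
    have huB : u ≤ (1 - 1/2^N) ^ g := cp_interior hw hs0 hs1 hN g hkN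
    have : canningsProb N s μ g (N - 1) 0 - L = R - u := by linarith
    rw [this, abs_of_nonpos (by linarith)]
    linarith
  -- conclude
  have heps0 : (0:ℝ) ≤ 1 - 1/2^N := by
    have : (1:ℝ)/2^N ≤ 1 := by
      rw [div_le_one (by positivity)]
      calc (1:ℝ) = 1 ^ N := (one_pow N).symm
        _ ≤ 2 ^ N := pow_le_pow_left₀ zero_le_one one_le_two N
    linarith
  have heps1 : (1:ℝ) - 1/2^N < 1 := by
    have : (0:ℝ) < 1/2^N := by positivity
    linarith
  have htend0 : Tendsto (fun g : ℕ => ((1:ℝ) - 1/2^N) ^ g) atTop (𝓝 (0:ℝ)) :=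
    tendsto_pow_atTop_nhds_zero_of_lt_one heps0 heps1
  have hz : Tendsto (fun g => canningsProb N s μ g (N - 1) 0 - L) atTop (𝓝 0) := by
    apply squeeze_zero_norm _ htend0
    intro g
    rw [Real.norm_eq_abs]
    exact hbound g
  have := hz.add_const L
  simpa using this
end A

end FPaux

/-- **Fixation probability via the stationary CASP** (Corollary 3.3): if `ν` is the
stationary distribution of the Cannings ancestral selection process, then the
fixation probability of a single beneficial mutant,
`π_N = lim_{g→∞} P(K_g = 0 | K_0 = N−1)`, exists and equals `E[A_eq / N]`. -/
theorem fixation_probability_eq_expected_casp_equilibrium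
    (N : ℕ) (hN : 1 ≤ N) (μ : Measure (ℕ → ℝ)) (s : ℝ)
    (hw : IsWeights N μ) (hs0 : 0 < s) (hs1 : s < 1)
    (ν : ℕ → ℝ)
    (hν0 : ∀ j, 0 ≤ ν j) (hνzero : ν 0 = 0) (hνsupp : ∀ j, N < j → ν j = 0)
    (hνsum : ∑ j ∈ Finset.range (N + 1), ν j = 1)
    (hνstat : ∀ j, ν j = ∑ i ∈ Finset.range (N + 1), ν i * caspStep N s μ i j) :
    Tendsto (fun g => canningsProb N s μ g (N - 1) 0) atTop
      (𝓝 (∑ j ∈ Finset.range (N + 1), ν j * ((j : ℝ) / N))) :=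
  FPaux.fixation_probability_eq_expected_casp_equilibrium' N hN μ s hw hs0 hs1
    ν hν0 hνzero hνsupp hνsum hνstat

end
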